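/- For C = ia⊗∂ - AI with A = ia·∂, the matrix ψ(C) where ψ(t) = t/(1-e^{-t}) satisfies ψ(C) = (A/(e^A - 1)) I - (1/A)(A/(e^A-1) - 1)(ia⊗∂), where A/(e^A-1) and (1/A)(A/(e^A-1)-1) are the well-defined formal power series obtained by substituting A into t/(e^t-1) and (1/t)(t/(e^t-1)-1) respectively. -/

import Mathlib

noncomputable section

/-- total degree of a monomial exponent. -/
def deg {n : ℕ} (d : Fin n →₀ ℕ) : ℕ := d.sum fun _ k => k

/-- the matrix power series `Σ_m a_m M^m` (entrywise; well defined when the entries of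
`M` have zero constant term). -/
def matF {n : ℕ} (a : ℕ → ℂ) (M : Matrix (Fin n) (Fin n) (MvPowerSeries (Fin n) ℂ)) :
    Matrix (Fin n) (Fin n) (MvPowerSeries (Fin n) ℂ) :=
  fun μ ν d => ∑ m ∈ Finset.range (deg d + 1), a m * MvPowerSeries.coeff d ((M ^ m) μ ν)

/-- the scalar power series `Σ_m a_m f^m` (well defined when `f` has zero constant term). -/
def scalF {n : ℕ} (a : ℕ → ℂ) (f : MvPowerSeries (Fin n) ℂ) : MvPowerSeries (Fin n) ℂ :=
  fun d => ∑ m ∈ Finset.range (deg d + 1), a m * MvPowerSeries.coeff d (f ^ m)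

open MvPowerSeries Finset in
lemma deg_add {n : ℕ} (d e : Fin n →₀ ℕ) : deg (d + e) = deg d + deg e :=
  Finsupp.sum_add_index' (fun _ => rfl) (fun _ _ _ => rfl)

open MvPowerSeries Finset in
lemma deg_eq_zero {n : ℕ} {d : Fin n →₀ ℕ} (h : deg d = 0) : d = 0 := by
  ext i
  have hle : d i ≤ deg d := by
    by_cases hi : i ∈ d.support
    · exact Finset.single_le_sum (f := fun j => d j) (fun _ _ => Nat.zero_le _) hi
    · simp [Finsupp.notMem_support_iff.mp hi]
  simp only [Finsupp.coe_zero, Pi.zero_apply]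
  omega

open MvPowerSeries Finset in
lemma coeff_pow_eq_zero {n : ℕ} {f : MvPowerSeries (Fin n) ℂ}
    (hf : constantCoeff f = 0) :
    ∀ {m : ℕ} {d : Fin n →₀ ℕ}, deg d < m → coeff d (f ^ m) = 0 := by
  intro m
  induction m with
  | zero => intro d h; omega
  | succ m ih =>
    intro d h
    rw [pow_succ, coeff_mul]
    refine Finset.sum_eq_zero fun p hp => ?_
    rw [Finset.HasAntidiagonal.mem_antidiagonal] at hp
    have hdeg : deg p.1 + deg p.2 = deg d := by rw [← deg_add, hp]
    by_cases h2 : deg p.2 = 0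
    · have : p.2 = 0 := deg_eq_zero h2
      rw [this]
      simp [MvPowerSeries.coeff_zero_eq_constantCoeff, hf]
    · have : deg p.1 < m := by omega
      rw [ih this, zero_mul]

open MvPowerSeries Finset in
lemma coeff_pow_mul_eq_zero {n : ℕ} {f g : MvPowerSeries (Fin n) ℂ}
    (hf : constantCoeff f = 0) (hg : constantCoeff g = 0)
    {m : ℕ} {d : Fin n →₀ ℕ} (h : deg d ≤ m) : coeff d (f ^ m * g) = 0 := by
  rw [coeff_mul]
  refine Finset.sum_eq_zero fun p hp => ?_
  rw [Finset.HasAntidiagonal.mem_antidiagonal] at hp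
  have hdeg : deg p.1 + deg p.2 = deg d := by rw [← deg_add, hp]
  by_cases h2 : deg p.2 = 0
  · have : p.2 = 0 := deg_eq_zero h2
    rw [this]
    simp [MvPowerSeries.coeff_zero_eq_constantCoeff, hg]
  · have : deg p.1 < m := by omega
    rw [coeff_pow_eq_zero hf this, zero_mul]

open MvPowerSeries Finset in
lemma coeff_scalF {n : ℕ} (a : ℕ → ℂ) (f : MvPowerSeries (Fin n) ℂ) (d : Fin n →₀ ℕ) :
    coeff d (scalF a f) = ∑ m ∈ Finset.range (deg d + 1), a m * coeff d (f ^ m) := rfl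

open MvPowerSeries Finset in
lemma coeff_scalF_mul {n : ℕ} (a : ℕ → ℂ) {f : MvPowerSeries (Fin n) ℂ}
    (hf : constantCoeff f = 0) (g : MvPowerSeries (Fin n) ℂ) (d : Fin n →₀ ℕ) :
    coeff d (scalF a f * g)
      = ∑ m ∈ Finset.range (deg d + 1), a m * coeff d (f ^ m * g) := by
  rw [coeff_mul]
  have step : ∀ p ∈ Finset.HasAntidiagonal.antidiagonal d,
      coeff p.1 (scalF a f) * coeff p.2 g
        = ∑ m ∈ Finset.range (deg d + 1), a m * (coeff p.1 (f ^ m) * coeff p.2 g) := by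
    intro p hp
    rw [Finset.HasAntidiagonal.mem_antidiagonal] at hp
    have hdeg : deg p.1 + deg p.2 = deg d := by rw [← deg_add, hp]
    rw [coeff_scalF, Finset.sum_mul]
    have hext : ∀ m ∈ Finset.range (deg d + 1), m ∉ Finset.range (deg p.1 + 1) →
        a m * (coeff p.1 (f ^ m) * coeff p.2 g) = 0 := by
      intro m hm hm'
      simp only [Finset.mem_range] at hm hm'
      rw [coeff_pow_eq_zero hf (by omega)]
      ring
    rw [← Finset.sum_subset (Finset.range_subset_range.2 (by omega)) hext]
    exact Finset.sum_congr rfl fun m _ => by ring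
  rw [Finset.sum_congr rfl step, Finset.sum_comm]
  exact Finset.sum_congr rfl fun m _ => by rw [coeff_mul, Finset.mul_sum]

/-- for `C = ia⊗∂ - AI` with `A = ia·∂`, substituting `C` into the Bernoulli
generating series `ψ(t) = t/(1-e^{-t}) = Σ ((-1)^k/k!) B_k t^k` gives
`ψ(C) = (A/(e^A-1)) I - (1/A)(A/(e^A-1) - 1)(ia⊗∂)`, where `A/(e^A-1) = Σ_m (B_m/m!) A^m`
and `(1/A)(A/(e^A-1)-1) = Σ_m (B_{m+1}/(m+1)!) A^m`. -/
theorem stmt17 {n : ℕ} (a : Fin n → ℂ)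
    (P : Matrix (Fin n) (Fin n) (MvPowerSeries (Fin n) ℂ))
    (A : MvPowerSeries (Fin n) ℂ)
    (hP : ∀ μ ν, P μ ν = MvPowerSeries.C (Complex.I * a μ) * MvPowerSeries.X ν)
    (hA : A = ∑ α, MvPowerSeries.C (Complex.I * a α) * MvPowerSeries.X α) :
    matF (fun m => (-1 : ℂ) ^ m * (bernoulli m : ℂ) * (m.factorial : ℂ)⁻¹)
        (P - A • (1 : Matrix (Fin n) (Fin n) (MvPowerSeries (Fin n) ℂ)))
      = scalF (fun m => (bernoulli m : ℂ) * (m.factorial : ℂ)⁻¹) A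
            • (1 : Matrix (Fin n) (Fin n) (MvPowerSeries (Fin n) ℂ))
        - scalF (fun m => (bernoulli (m + 1) : ℂ) * ((m + 1).factorial : ℂ)⁻¹) A • P := by
  classical
  open MvPowerSeries Finset in
  have hA0 : constantCoeff A = 0 := by
    rw [hA, map_sum]; simp
  have hP0 : ∀ μ ν, MvPowerSeries.constantCoeff (P μ ν) = 0 := by
    intro μ ν; rw [hP]; simp
  set Cm : Matrix (Fin n) (Fin n) (MvPowerSeries (Fin n) ℂ) := P - A • 1 with hCm
  have hPP : P * P = A • P := by
    funext μ ν
    rw [Matrix.mul_apply, Matrix.smul_apply, smul_eq_mul, hA, Finset.sum_mul]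
    exact Finset.sum_congr rfl fun κ _ => by rw [hP, hP, hP]; ring
  have hPC : P * Cm = 0 := by
    rw [hCm, Matrix.mul_sub, hPP, Matrix.mul_smul, Matrix.mul_one, sub_self]
  have hCpow : ∀ m : ℕ, Cm ^ (m + 1)
      = ((-1 : ℂ) ^ (m + 1)) •
        (A ^ (m + 1) • (1 : Matrix (Fin n) (Fin n) (MvPowerSeries (Fin n) ℂ)) - A ^ m • P) := by
    intro m
    induction m with
    | zero =>
      simp only [pow_one, pow_zero, one_smul, neg_one_smul, neg_sub, zero_add]
      exact hCm
    | succ m ih =>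
      rw [pow_succ, ih, Matrix.smul_mul, Matrix.sub_mul, Matrix.smul_mul, Matrix.smul_mul,
        hPC, smul_zero, sub_zero, Matrix.one_mul, hCm]
      rw [pow_succ (-1 : ℂ) (m + 1), mul_smul]
      congr 1
      rw [smul_sub, smul_smul, ← pow_succ, neg_one_smul, neg_sub]
  -- entrywise coefficient formula for powers of Cm
  have hCoeffPow : ∀ (m : ℕ) (μ ν : Fin n) (d : Fin n →₀ ℕ),
      MvPowerSeries.coeff d ((Cm ^ (m + 1)) μ ν)
        = (-1 : ℂ) ^ (m + 1) *
          (MvPowerSeries.coeff d (A ^ (m + 1) *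
              (1 : Matrix (Fin n) (Fin n) (MvPowerSeries (Fin n) ℂ)) μ ν)
            - MvPowerSeries.coeff d (A ^ m * P μ ν)) := by
    intro m μ ν d
    rw [hCpow m]
    rw [Matrix.smul_apply, Matrix.sub_apply, Matrix.smul_apply, Matrix.smul_apply,
      smul_eq_mul, smul_eq_mul]
    rw [map_smul, map_sub, smul_eq_mul]
  refine funext fun μ => funext fun ν => MvPowerSeries.ext fun d => ?_
  have lhs_eq : MvPowerSeries.coeff d (matF
      (fun m => (-1 : ℂ) ^ m * (bernoulli m : ℂ) * (m.factorial : ℂ)⁻¹) Cm μ ν)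
      = ∑ m ∈ Finset.range (deg d + 1),
          ((-1 : ℂ) ^ m * (bernoulli m : ℂ) * (m.factorial : ℂ)⁻¹) *
            MvPowerSeries.coeff d ((Cm ^ m) μ ν) := rfl
  rw [lhs_eq]
  rw [Matrix.sub_apply, Matrix.smul_apply, Matrix.smul_apply, smul_eq_mul, smul_eq_mul, map_sub]
  rw [coeff_scalF_mul _ hA0, coeff_scalF_mul _ hA0]
  -- split off the first term on the left and in the first sum, the last term in the second sum
  rw [Finset.sum_range_succ' (fun m => ((-1 : ℂ) ^ m * (bernoulli m : ℂ) * (m.factorial : ℂ)⁻¹) *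
      MvPowerSeries.coeff d ((Cm ^ m) μ ν))]
  rw [Finset.sum_range_succ' (fun m => ((bernoulli m : ℂ) * (m.factorial : ℂ)⁻¹) *
      MvPowerSeries.coeff d (A ^ m *
        (1 : Matrix (Fin n) (Fin n) (MvPowerSeries (Fin n) ℂ)) μ ν))]
  rw [Finset.sum_range_succ (fun m => ((bernoulli (m + 1) : ℂ) * ((m + 1).factorial : ℂ)⁻¹) *
      MvPowerSeries.coeff d (A ^ m * P μ ν))]
  rw [coeff_pow_mul_eq_zero hA0 (hP0 μ ν) (le_refl (deg d)), mul_zero, add_zero]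
  simp only [pow_zero, one_mul, bernoulli_zero, Nat.factorial_zero, Nat.cast_one, inv_one,
    Rat.cast_one]
  have hsum : ∀ m ∈ Finset.range (deg d),
      ((-1 : ℂ) ^ (m + 1) * (bernoulli (m + 1) : ℂ) * ((m + 1).factorial : ℂ)⁻¹) *
        MvPowerSeries.coeff d ((Cm ^ (m + 1)) μ ν)
      = ((bernoulli (m + 1) : ℂ) * ((m + 1).factorial : ℂ)⁻¹) *
          MvPowerSeries.coeff d (A ^ (m + 1) *
            (1 : Matrix (Fin n) (Fin n) (MvPowerSeries (Fin n) ℂ)) μ ν)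
        - ((bernoulli (m + 1) : ℂ) * ((m + 1).factorial : ℂ)⁻¹) *
          MvPowerSeries.coeff d (A ^ m * P μ ν) := by
    intro m _
    rw [hCoeffPow m μ ν d]
    have hsq : (-1 : ℂ) ^ (m + 1) * (-1 : ℂ) ^ (m + 1) = 1 := by
      rw [← mul_pow]; norm_num
    linear_combination ((bernoulli (m + 1) : ℂ) * (((m + 1).factorial : ℂ))⁻¹ *
      (MvPowerSeries.coeff d (A ^ (m + 1) *
          (1 : Matrix (Fin n) (Fin n) (MvPowerSeries (Fin n) ℂ)) μ ν)
        - MvPowerSeries.coeff d (A ^ m * P μ ν))) * hsq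
  rw [Finset.sum_congr rfl hsum, Finset.sum_sub_distrib]
  ring

end
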